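/- arXiv:1603.04202 — 2 statements merged into one kernel-verified Lean document; each statement's English description precedes it below -/
import Mathlib

section
/- Let c ∈ ℝ, q ∈ [1,∞], and let f(x) = (1/2π) ∫_ℝ φ(v) x^{−c−iv} dv with φ ∈ L¹(ℝ) ∩ L^q(ℝ). If v ↦ v^r φ(v) belongs to L¹(ℝ) for some r ∈ ℕ, then f has Mellin derivatives up to order r, for each k = 0, 1, …, r the function Θ^k_c f is continuous on (0,∞) with x^c (Θ^k_c f)(x) → 0 as x → 0⁺ and as x → ∞, and (Θ^k_c f)(x) = ((−i)^k/2π) ∫_ℝ v^k φ(v) x^{−c−iv} dv for all x > 0. -/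
open MeasureTheory Real Set Filter
open scoped Topology ENNReal

noncomputable section

def MemXp (c p : ℝ) (f : ℝ → ℂ) : Prop :=
  AEStronglyMeasurable f (volume.restrict (Set.Ioi 0)) ∧
    IntegrableOn (fun u : ℝ => ‖f u‖ ^ p * u ^ (c * p - 1)) (Set.Ioi 0)

def Xnorm (c p : ℝ) (f : ℝ → ℂ) : ℝ :=
  (∫ u in Set.Ioi (0:ℝ), ‖f u‖ ^ p * u ^ (c * p - 1)) ^ (1 / p)

def mellinT (c : ℝ) (f : ℝ → ℂ) (t : ℝ) : ℂ :=
  ∫ u in Set.Ioi (0:ℝ), f u * (u : ℂ) ^ ((c : ℂ) + (t : ℂ) * Complex.I - 1)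

def mellinRep (c : ℝ) (φ : ℝ → ℂ) (x : ℝ) : ℂ :=
  ((1 / (2 * π) : ℝ) : ℂ) * ∫ v : ℝ, φ v * (x : ℂ) ^ (-(c:ℂ) - (v:ℂ) * Complex.I)

def IsBernsteinPair (c σ p : ℝ) (g ψ : ℝ → ℂ) : Prop :=
  MemXp c p g ∧ ContinuousOn g (Set.Ioi 0) ∧ Integrable ψ ∧
    (∀ v : ℝ, σ < |v| → ψ v = 0) ∧ ∀ x ∈ Set.Ioi (0:ℝ), g x = mellinRep c ψ x

def mellinDist (c σ p : ℝ) (q : ℝ≥0∞) (φ : ℝ → ℂ) : ℝ≥0∞ :=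
  sInf {d : ℝ≥0∞ | ∃ g ψ : ℝ → ℂ, IsBernsteinPair c σ p g ψ ∧
    d = eLpNorm (fun v => φ v - ψ v) q volume}

def HasMellin2 (c : ℝ) (f g : ℝ → ℂ) : Prop :=
  Tendsto (fun ρ : ℝ => eLpNorm (fun t : ℝ =>
      g t - ∫ u in Set.Ioo (1/ρ) ρ, f u * (u : ℂ) ^ ((c:ℂ) + (t:ℂ) * Complex.I - 1)) 2 volume)
    atTop (𝓝 0)

def MemM1 (c : ℝ) (f : ℝ → ℂ) : Prop :=
  MemXp c 1 f ∧ ContinuousOn f (Set.Ioi 0) ∧ Integrable (mellinT c f)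

def MemM2 (c : ℝ) (f g : ℝ → ℂ) : Prop :=
  MemXp c 2 f ∧ ContinuousOn f (Set.Ioi 0) ∧ HasMellin2 c f g ∧ Integrable g

def Theta (c : ℝ) (f : ℝ → ℂ) : ℝ → ℂ := fun x => x * deriv f x + c * f x

def ThetaIter (c : ℝ) : ℕ → (ℝ → ℂ) → ℝ → ℂ
  | 0 => fun f => f
  | k+1 => fun f => Theta c (ThetaIter c k f)

def mellinDiff (c : ℝ) (r : ℕ) (h : ℝ) (f : ℝ → ℂ) (u : ℝ) : ℂ :=
  ∑ j ∈ Finset.range (r+1), ((-1:ℂ)) ^ (r-j) * (r.choose j : ℂ) *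
    ((h ^ ((j:ℝ) * c) : ℝ) : ℂ) * f (h ^ j * u)

def omegaMod (c p : ℝ) (r : ℕ) (f : ℝ → ℂ) (δ : ℝ) : ℝ :=
  sSup {w : ℝ | ∃ h : ℝ, 0 < h ∧ |Real.log h| ≤ δ ∧ w = Xnorm c p (mellinDiff c r h f)}

def LocAC (g : ℝ → ℂ) : Prop :=
  (∀ a b : ℝ, 0 < a → IntegrableOn (deriv g) (Set.Icc a b)) ∧
    ∀ a b : ℝ, 0 < a → a ≤ b → g b - g a = ∫ x in a..b, deriv g x

def MemW (c p : ℝ) (r : ℕ) (f g : ℝ → ℂ) : Prop :=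
  MemXp c p f ∧
    (∀ᵐ x ∂(volume.restrict (Set.Ioi 0)), f x = g x) ∧
    ContDiffOn ℝ (r - 1 : ℕ) g (Set.Ioi 0) ∧
    LocAC (iteratedDeriv (r-1) g) ∧
    MemXp c p (ThetaIter c r g)

def sinc (t : ℝ) : ℝ := if t = 0 then 1 else Real.sin (π * t) / (π * t)

def linc (c : ℝ) (x : ℝ) : ℝ := x ^ (-c) * _root_.sinc (Real.log x)


/-- `f` has Mellin derivative `L` at `x`, i.e. `lim_{h→1} (h^c f(hx) - f(x))/(h-1) = L`. -/
def HasMellinDerivAt (c : ℝ) (f : ℝ → ℂ) (x : ℝ) (L : ℂ) : Prop :=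
  Tendsto (fun h : ℝ => (((h:ℂ) ^ (c:ℂ)) * f (h * x) - f x) / ((h:ℂ) - 1))
    (𝓝[≠] (1:ℝ)) (𝓝 L)

/-- The candidate `k`-th Mellin derivative `((-i)^k/2π) ∫ v^k φ(v) x^{-c-iv} dv`. -/
def thetaRep (c : ℝ) (φ : ℝ → ℂ) (k : ℕ) (x : ℝ) : ℂ :=
  ((-Complex.I) ^ k / ((2 * π : ℝ) : ℂ)) *
    ∫ v : ℝ, (v:ℂ) ^ k * φ v * (x : ℂ) ^ (-(c:ℂ) - (v:ℂ) * Complex.I)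



section Helpers
open FourierTransform

namespace MellinAux

lemma abs_exp_mul_I_sub_one_le (θ : ℝ) :
    ‖Complex.exp ((θ:ℂ) * Complex.I) - 1‖ ≤ |θ| := by
  rw [Complex.exp_mul_I, ← Complex.ofReal_cos, ← Complex.ofReal_sin]
  have h : (↑(Real.cos θ) + ↑(Real.sin θ) * Complex.I - 1 : ℂ)
      = ((Real.cos θ - 1 : ℝ) : ℂ) + (Real.sin θ : ℝ) * Complex.I := by push_cast; ring
  rw [h, Complex.norm_add_mul_I, show |θ| = Real.sqrt (θ^2) from (Real.sqrt_sq_eq_abs θ).symm]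
  apply Real.sqrt_le_sqrt
  have h1 : Real.sin (θ/2)^2 ≤ (θ/2)^2 := Real.sin_sq_le_sq
  have h2 : Real.cos (θ/2)^2 = 1/2 + Real.cos (2*(θ/2)) / 2 := Real.cos_sq _
  rw [show 2*(θ/2) = θ by ring] at h2
  have h3 := Real.sin_sq_add_cos_sq (θ/2)
  have h4 := Real.sin_sq_add_cos_sq θ
  nlinarith

lemma abs_log_le_two_mul {h : ℝ} (h1 : 1/2 < h) (h2 : h < 2) :
    |Real.log h| ≤ 2 * |h - 1| := by
  have h0 : 0 < h := by linarith
  rcases le_or_gt 1 h with hh | hh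
  · rw [abs_of_nonneg (Real.log_nonneg hh), abs_of_nonneg (by linarith)]
    have := Real.log_le_sub_one_of_pos h0
    linarith
  · rw [abs_of_nonpos (Real.log_nonpos h0.le hh.le), abs_of_neg (by linarith)]
    have hlog := Real.log_le_sub_one_of_pos (inv_pos.2 h0)
    rw [Real.log_inv] at hlog
    have hi : h⁻¹ ≤ 2 := by rw [inv_le_iff_one_le_mul₀ h0]; linarith
    nlinarith [mul_nonneg (by linarith : (0:ℝ) ≤ 1 - h) (by linarith : (0:ℝ) ≤ 2 - h⁻¹),
      mul_inv_cancel₀ h0.ne']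

lemma integrable_pow_mul {φ : ℝ → ℂ} (hφ1 : Integrable φ)
    {r : ℕ} (hr : Integrable fun v : ℝ => (v:ℂ) ^ r * φ v) {k : ℕ} (hk : k ≤ r) :
    Integrable fun v : ℝ => (v:ℂ) ^ k * φ v := by
  have hmeas : AEStronglyMeasurable (fun v : ℝ => (v:ℂ) ^ k * φ v) volume :=
    ((Complex.continuous_ofReal.pow k).aestronglyMeasurable).mul hφ1.1
  refine (hφ1.norm.add hr.norm).mono' hmeas (ae_of_all _ fun v => ?_)
  simp only [norm_mul, norm_pow, Complex.norm_real, Real.norm_eq_abs, Pi.add_apply]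
  have hb : |v| ^ k ≤ 1 + |v| ^ r := by
    rcases le_or_gt (|v|) 1 with hv | hv
    · have e1 : |v|^k ≤ 1 := pow_le_one₀ (abs_nonneg v) hv
      have e2 : (0:ℝ) ≤ |v|^r := pow_nonneg (abs_nonneg v) r
      linarith
    · have : |v|^k ≤ |v|^r := pow_le_pow_right₀ hv.le hk
      linarith
  nlinarith [norm_nonneg (φ v), mul_le_mul_of_nonneg_right hb (norm_nonneg (φ v))]

lemma cpow_split {x : ℝ} (hx : 0 < x) (c v : ℝ) :
    (x:ℂ) ^ (-(c:ℂ) - (v:ℂ) * Complex.I)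
      = ((x ^ (-c) : ℝ) : ℂ) * Complex.exp (((-(v * Real.log x) : ℝ) : ℂ) * Complex.I) := by
  rw [Complex.cpow_def_of_ne_zero (by exact_mod_cast hx.ne'), ← Complex.ofReal_log hx.le,
    Real.rpow_def_of_pos hx, Complex.ofReal_exp, ← Complex.exp_add]
  congr 1
  push_cast
  ring

lemma cpow_I_eq {h : ℝ} (hh : 0 < h) (v : ℝ) :
    (h:ℂ) ^ (-(v:ℂ) * Complex.I)
      = Complex.exp (((-(v * Real.log h) : ℝ) : ℂ) * Complex.I) := by
  rw [Complex.cpow_def_of_ne_zero (by exact_mod_cast hh.ne'), ← Complex.ofReal_log hh.le]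
  congr 1
  push_cast
  ring

lemma integral_exp_eq_fourier (ψ : ℝ → ℂ) (t : ℝ) :
    (∫ v : ℝ, ψ v * Complex.exp (((-(v * t) : ℝ) : ℂ) * Complex.I)) = 𝓕 ψ (t / (2 * π)) := by
  rw [Real.fourier_real_eq_integral_exp_smul]
  congr 1
  ext v
  rw [smul_eq_mul, mul_comm]
  have hπ : (2:ℝ) * π ≠ 0 := by positivity
  rw [show (-2 * π * v * (t / (2 * π)) : ℝ) = -(v * t) by field_simp]

lemma thetaRep_eq (c : ℝ) (φ : ℝ → ℂ) (k : ℕ) {x : ℝ} (hx : 0 < x) :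
    thetaRep c φ k x = ((-Complex.I) ^ k / ((2 * π : ℝ) : ℂ)) * ((x ^ (-c) : ℝ) : ℂ) *
      𝓕 (fun v : ℝ => (v:ℂ) ^ k * φ v) (Real.log x / (2 * π)) := by
  rw [thetaRep, ← integral_exp_eq_fourier]
  simp only [cpow_split hx c]
  simp_rw [show ∀ (a b : ℂ), a * (((x ^ (-c) : ℝ) : ℂ) * b) = ((x ^ (-c) : ℝ) : ℂ) * (a * b)
    from fun a b => by ring, integral_const_mul]
  ring

lemma fourier_continuous {ψ : ℝ → ℂ} (hψ : Integrable ψ) : Continuous (𝓕 ψ) :=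
  VectorFourier.fourierIntegral_continuous Real.continuous_fourierChar continuous_inner hψ

lemma thetaRep_continuousOn (c : ℝ) (φ : ℝ → ℂ) (k : ℕ)
    (hψ : Integrable fun v : ℝ => (v:ℂ)^k * φ v) :
    ContinuousOn (thetaRep c φ k) (Set.Ioi 0) := by
  have hF := fourier_continuous hψ
  refine ContinuousOn.congr ?_ (fun x (hx : 0 < x) => thetaRep_eq c φ k hx)
  refine ContinuousOn.mul (ContinuousOn.mul continuousOn_const ?_) ?_
  · exact Complex.continuous_ofReal.comp_continuousOn
      (fun x hx => (Real.continuousAt_rpow_const x (-c)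
        (Or.inl (ne_of_gt hx))).continuousWithinAt)
  · exact hF.comp_continuousOn
      ((Real.continuousOn_log.mono (fun x (hx : 0 < x) => ne_of_gt hx)).div_const (2 * π))

lemma thetaRep_decay (c : ℝ) (φ : ℝ → ℂ) (k : ℕ)
    (hψ : Integrable fun v : ℝ => (v:ℂ)^k * φ v) :
    Tendsto (fun x : ℝ => ((x ^ c : ℝ) : ℂ) * thetaRep c φ k x) (𝓝[>] (0:ℝ)) (𝓝 0) ∧
    Tendsto (fun x : ℝ => ((x ^ c : ℝ) : ℂ) * thetaRep c φ k x) atTop (𝓝 0) := by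
  set ψ := fun v : ℝ => (v:ℂ)^k * φ v with hψdef
  set C : ℂ := ((-Complex.I) ^ k / ((2 * π : ℝ) : ℂ)) with hC
  have hRL : Tendsto (𝓕 ψ) (cocompact ℝ) (𝓝 0) := Real.zero_at_infty_fourier ψ
  have key : ∀ x : ℝ, 0 < x → ((x ^ c : ℝ) : ℂ) * thetaRep c φ k x
      = C * 𝓕 ψ (Real.log x / (2 * π)) := by
    intro x hx
    rw [thetaRep_eq c φ k hx]
    have h1 : ((x ^ c : ℝ) : ℂ) * ((x ^ (-c) : ℝ) : ℂ) = 1 := by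
      rw [← Complex.ofReal_mul, ← Real.rpow_add hx]; simp
    linear_combination C * 𝓕 ψ (Real.log x / (2 * π)) * h1
  have h2π : (0:ℝ) < 2 * π := by positivity
  constructor
  · have hlog : Tendsto (fun x : ℝ => Real.log x / (2 * π)) (𝓝[>] (0:ℝ)) (cocompact ℝ) := by
      rw [cocompact_eq_atBot_atTop]
      exact (Real.tendsto_log_nhdsGT_zero.atBot_div_const h2π).mono_right le_sup_left
    have := (hRL.comp hlog).const_mul C
    rw [mul_zero] at this
    exact this.congr' ((eventually_mem_nhdsWithin).mono fun x hx => (key x hx).symm)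
  · have hlog : Tendsto (fun x : ℝ => Real.log x / (2 * π)) atTop (cocompact ℝ) := by
      rw [cocompact_eq_atBot_atTop]
      exact (Real.tendsto_log_atTop.atTop_div_const h2π).mono_right le_sup_right
    have := (hRL.comp hlog).const_mul C
    rw [mul_zero] at this
    exact this.congr' ((eventually_gt_atTop 0).mono fun x hx => (key x hx).symm)

lemma integrable_mul_bdd {ψ u : ℝ → ℂ} (hψ : Integrable ψ) (hu : Continuous u) (B : ℝ)
    (hB : ∀ v, ‖u v‖ ≤ B) : Integrable fun v => ψ v * u v := by
  refine (hψ.norm.mul_const B).mono' (hψ.1.mul hu.aestronglyMeasurable)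
    (ae_of_all _ fun v => ?_)
  rw [norm_mul]
  exact mul_le_mul_of_nonneg_left (hB v) (norm_nonneg _)

lemma thetaRep_hasDeriv (c : ℝ) (φ : ℝ → ℂ) (k : ℕ)
    (hk1 : Integrable fun v : ℝ => (v:ℂ)^k * φ v)
    (hk2 : Integrable fun v : ℝ => (v:ℂ)^(k+1) * φ v)
    {x : ℝ} (hx : 0 < x) :
    Tendsto (fun h : ℝ =>
        (((h:ℂ) ^ (c:ℂ)) * thetaRep c φ k (h * x) - thetaRep c φ k x) / ((h:ℂ) - 1))
      (𝓝[≠] (1:ℝ)) (𝓝 (thetaRep c φ (k+1) x)) := by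
  set ψ : ℝ → ℂ := fun v => (v:ℂ)^k * φ v with hψdef
  set C : ℂ := ((-Complex.I) ^ k / ((2 * π : ℝ) : ℂ)) with hC
  set E1 : ℝ → ℂ := fun v => Complex.exp (((-(v * Real.log x) : ℝ) : ℂ) * Complex.I) with hE1
  set E2 : ℝ → ℝ → ℂ :=
    fun h v => Complex.exp (((-(v * Real.log h) : ℝ) : ℂ) * Complex.I) with hE2
  set u : ℝ → ℂ := fun v => ((x ^ (-c) : ℝ) : ℂ) * E1 v with hu
  set F : ℝ → ℝ → ℂ := fun h v => ψ v * u v * ((E2 h v - 1) / ((h:ℂ) - 1)) with hF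
  have hc1 : Continuous fun v : ℝ => ((-(v * Real.log x) : ℝ) : ℂ) * Complex.I :=
    (Complex.continuous_ofReal.comp ((continuous_id.mul continuous_const).neg)).mul
      continuous_const
  have hE1c : Continuous E1 := Complex.continuous_exp.comp hc1
  have hE2c : ∀ h : ℝ, Continuous (E2 h) := fun h =>
    Complex.continuous_exp.comp
      ((Complex.continuous_ofReal.comp ((continuous_id.mul continuous_const).neg)).mul
        continuous_const)
  have huc : Continuous u := continuous_const.mul hE1c
  have hE1n : ∀ v, ‖E1 v‖ = 1 := fun v => by
    simp only [hE1]; exact Complex.norm_exp_ofReal_mul_I _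
  have hE2n : ∀ h v, ‖E2 h v‖ = 1 := fun h v => by
    simp only [hE2]; exact Complex.norm_exp_ofReal_mul_I _
  have hun : ∀ v, ‖u v‖ = x ^ (-c) := fun v => by
    rw [hu, norm_mul, hE1n, Complex.norm_real, Real.norm_eq_abs,
      abs_of_nonneg (Real.rpow_nonneg hx.le _), mul_one]
  have hxc : (0:ℝ) ≤ x ^ (-c) := Real.rpow_nonneg hx.le _
  -- Step 1: dominated convergence
  have step1 : Tendsto (fun h : ℝ => ∫ v : ℝ, F h v) (𝓝[≠] (1:ℝ))
      (𝓝 (∫ v : ℝ, ψ v * u v * (-(v:ℂ) * Complex.I))) := by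
    refine tendsto_integral_filter_of_dominated_convergence
      (fun v => (2 * x ^ (-c)) * ‖(v:ℂ)^(k+1) * φ v‖) ?_ ?_ ?_ ?_
    · refine Eventually.of_forall fun h => ?_
      exact (hk1.1.mul huc.aestronglyMeasurable).mul
        (((hE2c h).sub continuous_const).div_const _).aestronglyMeasurable
    · have hev : ∀ᶠ h in 𝓝[≠] (1:ℝ), h ∈ Ioo (1/2:ℝ) 2 :=
        eventually_nhdsWithin_of_eventually_nhds (Ioo_mem_nhds (by norm_num) (by norm_num))
      filter_upwards [hev] with h hh
      refine ae_of_all _ fun v => ?_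
      have hlog : |Real.log h| ≤ 2 * |h - 1| := abs_log_le_two_mul hh.1 hh.2
      have hnum : ‖E2 h v - 1‖ ≤ |v| * (2 * |h - 1|) := by
        calc ‖E2 h v - 1‖ ≤ |(-(v * Real.log h) : ℝ)| := abs_exp_mul_I_sub_one_le _
          _ = |v| * |Real.log h| := by rw [abs_neg, abs_mul]
          _ ≤ |v| * (2 * |h - 1|) := by
              exact mul_le_mul_of_nonneg_left hlog (abs_nonneg v)
      have hden : ‖(h:ℂ) - 1‖ = |h - 1| := by
        rw [show ((h:ℂ) - 1) = (((h - 1 : ℝ)) : ℂ) by push_cast; ring, Complex.norm_real,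
          Real.norm_eq_abs]
      rw [norm_mul, norm_mul, norm_div, hun, hden]
      have hψn : ‖ψ v‖ = |v|^k * ‖φ v‖ := by
        simp [hψdef, norm_mul, Complex.norm_real, Real.norm_eq_abs]
      have hgoal : ‖(v:ℂ)^(k+1) * φ v‖ = |v|^(k+1) * ‖φ v‖ := by
        simp [norm_mul, Complex.norm_real, Real.norm_eq_abs]
      rw [hψn, hgoal]
      rcases eq_or_ne h 1 with rfl | hne
      · simp only [hE2, Real.log_one, mul_zero, neg_zero, Complex.ofReal_zero, zero_mul,
          Complex.exp_zero, sub_self, zero_div, norm_zero, mul_zero]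
        positivity
      · have hpos : 0 < |h - 1| := abs_pos.2 (sub_ne_zero.2 hne)
        rw [← mul_div_assoc, div_le_iff₀ hpos]
        calc |v|^k * ‖φ v‖ * (x ^ (-c)) * ‖E2 h v - 1‖
            ≤ |v|^k * ‖φ v‖ * (x ^ (-c)) * (|v| * (2 * |h - 1|)) := by
              exact mul_le_mul_of_nonneg_left hnum
                (by positivity)
          _ = 2 * x ^ (-c) * (|v|^(k+1) * ‖φ v‖) * |h - 1| := by rw [pow_succ]; ring
    · exact (hk2.norm.const_mul _)
    · refine ae_of_all _ fun v => ?_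
      have hd : HasDerivAt (fun h : ℝ => ((h:ℂ)) ^ (-(v:ℂ) * Complex.I))
          (-(v:ℂ) * Complex.I) 1 := by
        have h0 := (Complex.hasStrictDerivAt_cpow_const (x := (1:ℂ))
          (c := -(v:ℂ) * Complex.I) Complex.one_mem_slitPlane).hasDerivAt
        have h1 := h0.comp_ofReal (z := (1:ℝ))
        simpa using h1
      have hslope := hasDerivAt_iff_tendsto_slope.mp hd
      have hq : Tendsto (fun h : ℝ => (E2 h v - 1) / ((h:ℂ) - 1)) (𝓝[≠] (1:ℝ))
          (𝓝 (-(v:ℂ) * Complex.I)) := by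
        refine hslope.congr' ?_
        have hev : ∀ᶠ h in 𝓝[≠] (1:ℝ), 0 < h ∧ h ≠ 1 := by
          filter_upwards [eventually_nhdsWithin_of_eventually_nhds
            (eventually_gt_nhds (by norm_num : (0:ℝ) < 1)), self_mem_nhdsWithin] with h h1 h2
          exact ⟨h1, h2⟩
        filter_upwards [hev] with h ⟨hh0, hh1⟩
        rw [slope_def_module]
        simp only [hE2]
        rw [← cpow_I_eq hh0 v, Complex.ofReal_one, Complex.one_cpow, Complex.real_smul]
        push_cast
        ring
      have := hq.const_mul (ψ v * u v)
      simpa [hF] using this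
  -- Step 2: assembly
  have hInt0 : Integrable fun v => ψ v * u v :=
    integrable_mul_bdd hk1 huc (x ^ (-c)) (fun v => (hun v).le)
  have hInt1 : ∀ h : ℝ, Integrable fun v => ψ v * u v * E2 h v := fun h =>
    integrable_mul_bdd hInt0 (hE2c h) 1 (fun v => (hE2n h v).le)
  have htarget : thetaRep c φ (k+1) x = C * ∫ v, ψ v * u v * (-(v:ℂ) * Complex.I) := by
    rw [thetaRep, ← integral_const_mul, ← integral_const_mul]
    congr 1
    funext v
    simp only [cpow_split hx c, hψdef, hu, hE1, hC]
    rw [pow_succ, pow_succ]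
    ring
  rw [htarget]
  have hmain := step1.const_mul C
  refine hmain.congr' ?_
  have hev : ∀ᶠ h in 𝓝[≠] (1:ℝ), 0 < h ∧ h ≠ 1 := by
    filter_upwards [eventually_nhdsWithin_of_eventually_nhds
      (eventually_gt_nhds (by norm_num : (0:ℝ) < 1)), self_mem_nhdsWithin] with h h1 h2
    exact ⟨h1, h2⟩
  filter_upwards [hev] with h ⟨hh0, hh1⟩
  have hcancel : ((h:ℂ)) ^ (c:ℂ) * ((h ^ (-c) : ℝ) : ℂ) = 1 := by
    rw [← Complex.ofReal_cpow hh0.le, ← Complex.ofReal_mul, ← Real.rpow_add hh0]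
    simp
  have hA : thetaRep c φ k (h * x) = C * (((h ^ (-c) : ℝ) : ℂ) * ∫ v, ψ v * u v * E2 h v) := by
    rw [thetaRep]
    simp only [cpow_split (mul_pos hh0 hx) c]
    simp only [Real.log_mul hh0.ne' hx.ne', Real.mul_rpow hh0.le hx.le]
    rw [← integral_const_mul, ← integral_const_mul, ← integral_const_mul]
    congr 1
    funext v
    simp only [hψdef, hu, hE1, hE2, hC]
    rw [show (-(v * (Real.log h + Real.log x)) : ℝ)
        = -(v * Real.log x) + -(v * Real.log h) by ring, Complex.ofReal_add, add_mul,
      Complex.exp_add]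
    push_cast
    ring
  have hB : thetaRep c φ k x = C * ∫ v, ψ v * u v := by
    rw [thetaRep, ← integral_const_mul, ← integral_const_mul]
    congr 1
    funext v
    simp only [cpow_split hx c, hψdef, hu, hE1, hC]
  have hI : ∫ v, F h v
      = ((∫ v, ψ v * u v * E2 h v) - ∫ v, ψ v * u v) * ((h:ℂ) - 1)⁻¹ := by
    rw [← integral_sub (hInt1 h) hInt0, ← integral_mul_const]
    congr 1
    funext v
    simp only [hF]
    ring
  rw [hI, hA, hB]
  rw [div_eq_mul_inv]
  linear_combination (-(((h:ℂ) - 1)⁻¹ * C * ∫ v, ψ v * u v * E2 h v)) * hcancel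


end MellinAux
end Helpers

/-- Theorem 2: Mellin derivatives of functions in `G^q_c`. -/
theorem mellin_derivative_representation
    (c : ℝ) (q : ℝ≥0∞) (hq : 1 ≤ q) (r : ℕ)
    (f φ : ℝ → ℂ) (hφ1 : Integrable φ) (hφq : MemLp φ q volume)
    (hf : ∀ x ∈ Set.Ioi (0:ℝ), f x = mellinRep c φ x)
    (hr : Integrable fun v : ℝ => (v:ℂ) ^ r * φ v) :
    (∀ x ∈ Set.Ioi (0:ℝ), thetaRep c φ 0 x = f x) ∧
    (∀ k < r, ∀ x ∈ Set.Ioi (0:ℝ),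
        HasMellinDerivAt c (thetaRep c φ k) x (thetaRep c φ (k+1) x)) ∧
    (∀ k ≤ r, ContinuousOn (thetaRep c φ k) (Set.Ioi 0) ∧
        Tendsto (fun x : ℝ => ((x ^ c : ℝ) : ℂ) * thetaRep c φ k x) (𝓝[>] (0:ℝ)) (𝓝 0) ∧
        Tendsto (fun x : ℝ => ((x ^ c : ℝ) : ℂ) * thetaRep c φ k x) atTop (𝓝 0)) := by
  
  have hint : ∀ k : ℕ, k ≤ r → Integrable fun v : ℝ => (v:ℂ)^k * φ v :=
    fun k hk => MellinAux.integrable_pow_mul hφ1 hr hk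
  refine ⟨?_, ?_, ?_⟩
  · intro x hx
    rw [hf x hx, thetaRep, mellinRep]
    simp only [pow_zero, one_mul]
    congr 1
    push_cast
    ring
  · intro k hk x hx
    exact MellinAux.thetaRep_hasDeriv c φ k (hint k hk.le)
      (hint (k+1) (Nat.succ_le_of_lt hk)) hx
  · intro k hk
    exact ⟨MellinAux.thetaRep_continuousOn c φ k (hint k hk),
      (MellinAux.thetaRep_decay c φ k (hint k hk)).1,
      (MellinAux.thetaRep_decay c φ k (hint k hk)).2⟩
end
end

section
/- Let c ∈ ℝ, σ > 0, p ∈ [1,2], k ∈ ℕ, and let f(x) = (1/2π) ∫_ℝ φ(v) x^{−c−iv} dv where φ ∈ L¹(ℝ) ∩ L^∞(ℝ) is continuous. If v ↦ v^k φ(v) belongs to L¹(ℝ) ∩ L^∞(ℝ), then dist_∞(Θ^k_c f, B^p_{c,σ}) = sup_{|v| ≥ σ} |v^k φ(v)|. -/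
open MeasureTheory Real Set Filter
open scoped Topology ENNReal

noncomputable section

open scoped FourierTransform


private lemma ofReal_norm_le_eLpNormTop (f h : ℝ → ℂ) (v₀ : ℝ)
    (hc : ContinuousAt h v₀) (heq : ∀ᶠ v in 𝓝 v₀, f v = h v) :
    ENNReal.ofReal ‖h v₀‖ ≤ eLpNorm f ⊤ volume := by
  rw [MeasureTheory.eLpNorm_exponent_top]
  by_contra hlt
  push_neg at hlt
  set E := eLpNormEssSup f volume with hE
  have hEtop : E ≠ ⊤ := (hlt.trans ENNReal.ofReal_lt_top).ne
  have h1 : E.toReal < ‖h v₀‖ := (ENNReal.lt_ofReal_iff_toReal_lt hEtop).mp hlt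
  set r : ℝ := (E.toReal + ‖h v₀‖) / 2 with hr
  have hr1 : E.toReal < r := by rw [hr]; linarith
  have hr2 : r < ‖h v₀‖ := by rw [hr]; linarith
  have hEr : E < ENNReal.ofReal r := (ENNReal.lt_ofReal_iff_toReal_lt hEtop).mpr hr1
  have hev : ∀ᶠ v in 𝓝 v₀, r < ‖h v‖ := hc.norm.eventually_const_lt hr2
  have hS : {v : ℝ | f v = h v ∧ r < ‖h v‖} ∈ 𝓝 v₀ := by
    filter_upwards [heq, hev] with v h1 h2
    exact ⟨h1, h2⟩
  obtain ⟨U, hUS, hUo, hv₀U⟩ := mem_nhds_iff.mp hS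
  have hnull : volume {v : ℝ | E < (‖f v‖₊ : ℝ≥0∞)} = 0 := by
    have h := MeasureTheory.ae_le_eLpNormEssSup (f := f) (μ := volume)
    rw [ae_iff] at h
    simp only [not_le, enorm_eq_nnnorm] at h
    exact h
  have hsub : U ⊆ {v : ℝ | E < (‖f v‖₊ : ℝ≥0∞)} := by
    intro v hv
    obtain ⟨hfe, hrv⟩ := hUS hv
    have h2 : ENNReal.ofReal r ≤ (‖f v‖₊ : ℝ≥0∞) := by
      rw [← enorm_eq_nnnorm, ← ofReal_norm, hfe]
      exact ENNReal.ofReal_le_ofReal hrv.le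
    exact hEr.trans_le h2
  have hpos := hUo.measure_pos volume ⟨v₀, hv₀U⟩
  exact hpos.ne' (measure_mono_null hsub hnull)

private lemma integrableOn_core (b : ℝ) (hb : 0 < b) :
    IntegrableOn (fun x : ℝ => x⁻¹ * (1 + (Real.log x / b) ^ 2)⁻¹) (Set.Ioi 0) := by
  set D : ℝ → ℝ := fun x => x⁻¹ * (1 + (Real.log x / b) ^ 2)⁻¹ with hD
  have hderiv : ∀ x : ℝ, 0 < x →
      HasDerivAt (fun y => b * Real.arctan (Real.log y / b)) (D x) x := by
    intro x hx
    have h1 : HasDerivAt Real.log x⁻¹ x := Real.hasDerivAt_log hx.ne'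
    have h2 : HasDerivAt (fun y => Real.log y / b) (x⁻¹ / b) x := h1.div_const b
    have h3 := (Real.hasDerivAt_arctan (Real.log x / b)).comp x h2
    have h4 := h3.const_mul b
    refine h4.congr_deriv ?_
    rw [hD]
    field_simp
  have hDnn : ∀ x : ℝ, 0 < x → 0 ≤ D x := by
    intro x hx
    apply mul_nonneg (inv_nonneg.mpr hx.le)
    apply inv_nonneg.mpr
    positivity
  have htend : Tendsto (fun y : ℝ => b * Real.arctan (Real.log y / b)) atTop
      (𝓝 (b * (π / 2))) := by
    have h1 : Tendsto (fun y : ℝ => Real.log y / b) atTop atTop :=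
      Real.tendsto_log_atTop.atTop_div_const hb
    have h2 : Tendsto Real.arctan atTop (𝓝 (π / 2)) :=
      Real.tendsto_arctan_atTop.mono_right nhdsWithin_le_nhds
    exact (h2.comp h1).const_mul b
  have hIoi1 : IntegrableOn D (Set.Ioi 1) := by
    apply integrableOn_Ioi_deriv_of_nonneg
      (g := fun y => b * Real.arctan (Real.log y / b)) (l := b * (π / 2))
    · apply ContinuousAt.continuousWithinAt
      have hlog : ContinuousAt Real.log 1 := Real.continuousAt_log one_ne_zero
      exact ((Real.continuous_arctan.continuousAt).comp (hlog.div_const b)).const_mul b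
    · exact fun x hx => hderiv x (lt_trans one_pos hx)
    · exact fun x hx => hDnn x (lt_trans one_pos hx)
    · exact htend
  have himg : (fun x : ℝ => x⁻¹) '' (Set.Ioi 1) = Set.Ioo 0 1 := by
    ext y
    constructor
    · rintro ⟨x, hx, rfl⟩
      have hx0 : (0 : ℝ) < x := lt_trans one_pos hx
      constructor
      · exact inv_pos.mpr hx0
      · rw [inv_lt_one_iff₀]
        right; exact hx
    · intro hy
      refine ⟨y⁻¹, ?_, inv_inv y⟩
      rw [Set.mem_Ioi, one_lt_inv_iff₀]
      exact ⟨hy.1, hy.2⟩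
  have hIoo : IntegrableOn D (Set.Ioo 0 1) := by
    rw [← himg]
    rw [integrableOn_image_iff_integrableOn_abs_deriv_smul measurableSet_Ioi
      (f' := fun x => -(x ^ 2)⁻¹)
      (fun x hx => (hasDerivAt_inv (ne_of_gt (lt_trans one_pos hx))).hasDerivWithinAt)
      (fun x _ y _ hxy => inv_injective hxy)]
    apply hIoi1.congr_fun ?_ measurableSet_Ioi
    intro x hx
    have hx0 : (0 : ℝ) < x := lt_trans one_pos hx
    have hx2 : (0 : ℝ) < x ^ 2 := by positivity
    rw [hD]
    simp only [smul_eq_mul, abs_neg, abs_inv, abs_of_pos hx2, Real.log_inv, inv_inv]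
    rw [show (-Real.log x / b) ^ 2 = (Real.log x / b) ^ 2 by ring]
    field_simp
  have hsub : Set.Ioi (0:ℝ) ⊆ Set.Ioo 0 1 ∪ Set.Ici 1 := by
    intro x hx
    rcases lt_or_ge x 1 with h | h
    · exact Or.inl ⟨hx, h⟩
    · exact Or.inr h
  exact (hIoo.union ((integrableOn_Ici_iff_integrableOn_Ioi (f := D) (b := 1) (μ := volume)).mpr hIoi1)).mono_set hsub

set_option maxHeartbeats 1000000

/-- The key construction: given a continuous integrable `θ`, bounded by `S` outside
`(-σ, σ)`, there is a Bernstein pair approximating `θ` within `S + ε` uniformly. -/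
private lemma exists_pair (c σ p : ℝ) (hσ : 0 < σ) (hp1 : 1 ≤ p) (hp2 : p ≤ 2)
    (θ : ℝ → ℂ) (hθc : Continuous θ) (hθ1 : Integrable θ)
    (S ε : ℝ) (hε : 0 < ε) (hS0 : 0 ≤ S) (hS : ∀ v : ℝ, σ ≤ |v| → ‖θ v‖ ≤ S) :
    ∃ g ψ : ℝ → ℂ,
      ((AEStronglyMeasurable g (volume.restrict (Set.Ioi 0)) ∧
          IntegrableOn (fun u : ℝ => ‖g u‖ ^ p * u ^ (c * p - 1)) (Set.Ioi 0)) ∧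
        ContinuousOn g (Set.Ioi 0) ∧ Integrable ψ ∧
        (∀ v : ℝ, σ < |v| → ψ v = 0) ∧ ∀ x ∈ Set.Ioi (0:ℝ), g x = mellinRep c ψ x) ∧
      ∀ v : ℝ, ‖θ v - ψ v‖ ≤ S + ε := by
  have hπ : (0:ℝ) < π := Real.pi_pos
  -- uniform continuity on a compact interval
  obtain ⟨δ₁, hδ₁0, hδ₁⟩ := (Metric.uniformContinuousOn_iff_le).mp
    ((isCompact_Icc (a := -(σ+1)) (b := σ+1)).uniformContinuousOn_of_continuous
      hθc.continuousOn) (ε/2) (by positivity)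
  set δ : ℝ := min (δ₁/2) (min 1 (σ/2)) with hδdef
  have hδ0 : 0 < δ := lt_min (by linarith) (lt_min one_pos (by linarith))
  have hδδ₁ : δ ≤ δ₁/2 := min_le_left _ _
  have hδ1 : δ ≤ 1 := le_trans (min_le_right _ _) (min_le_left _ _)
  have hδσ : δ ≤ σ/2 := le_trans (min_le_right _ _) (min_le_right _ _)
  set a : ℝ := σ - δ with ha_def
  have ha0 : 0 < a := by simp only [ha_def]; linarith
  set F : ContDiffBump (0:ℝ) := ⟨δ/2, δ, by positivity, by linarith⟩ with hF
  set Fn : ℝ → ℝ := F.normed volume with hFn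
  set Fc : ℝ → ℂ := fun s => (Fn s : ℂ) with hFc
  set η : ℝ → ℂ := Set.indicator (Set.Icc (-a) a) θ with hη
  have hηi : Integrable η := hθ1.indicator measurableSet_Icc
  have hηcs : HasCompactSupport η := HasCompactSupport.intro isCompact_Icc
      (fun x hx => Set.indicator_of_notMem hx _)
  have hFncont : Continuous Fn := F.continuous_normed
  have hFcc : Continuous Fc := Complex.continuous_ofReal.comp hFncont
  have hFccd : ContDiff ℝ ((2:ℕ∞) : WithTop ℕ∞) Fc :=
    Complex.ofRealCLM.contDiff.comp (F.contDiff_normed (n := 2))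
  have hFcs : HasCompactSupport Fc :=
    F.hasCompactSupport_normed.comp_left (g := (Complex.ofReal : ℝ → ℂ)) Complex.ofReal_zero
  set L : ℂ →L[ℝ] ℂ →L[ℝ] ℂ := ContinuousLinearMap.mul ℝ ℂ with hL
  set ψ : ℝ → ℂ := convolution η Fc L volume with hψ
  have hψdef : ∀ v : ℝ, ψ v = ∫ t : ℝ, η t * Fc (v - t) := by
    intro v
    rw [hψ, convolution_def]
    simp only [hL, ContinuousLinearMap.mul_apply']
  have hψc : Continuous ψ := hFcs.continuous_convolution_right L hηi.locallyIntegrable hFcc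
  have hψcd : ContDiff ℝ ((2:ℕ∞) : WithTop ℕ∞) ψ :=
    hFcs.contDiff_convolution_right L hηi.locallyIntegrable hFccd
  have hψs : HasCompactSupport ψ := hηcs.convolution L hFcs
  have hFnz : ∀ y : ℝ, δ ≤ |y| → Fn y = 0 := by
    intro y hy
    by_contra h0
    have : y ∈ Function.support Fn := h0
    rw [hFn, F.support_normed_eq] at this
    rw [Metric.mem_ball, Real.dist_eq, sub_zero] at this
    have : |y| < δ := this
    linarith
  have hψ0 : ∀ v : ℝ, σ < |v| → ψ v = 0 := by
    intro v hv
    rw [hψdef]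
    have hz : ∀ t : ℝ, η t * Fc (v - t) = 0 := by
      intro t
      by_cases ht : t ∈ Set.Icc (-a) a
      · have h2 : |t| ≤ a := abs_le.mpr ⟨ht.1, ht.2⟩
        have h3 : |v| - |t| ≤ |v - t| := by
          have := abs_sub_abs_le_abs_sub v t
          linarith
        have h4 : δ ≤ |v - t| := by
          simp only [ha_def] at h2
          linarith
        have hz0 : Fn (v - t) = 0 := hFnz _ h4
        simp [hFc, hz0]
      · rw [hη, Set.indicator_of_notMem ht, zero_mul]
    simp only [hz, integral_zero]
  have hψi : Integrable ψ := hψc.integrable_of_hasCompactSupport hψs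
  -- derivatives
  have h21 : ((2:ℕ∞) : WithTop ℕ∞) = 1 + 1 := by norm_cast
  have hd1 := contDiff_succ_iff_deriv.mp (h21 ▸ hψcd)
  have hψdiff : Differentiable ℝ ψ := hd1.1
  have hd2 := contDiff_one_iff_deriv.mp hd1.2.2
  have hψ'diff : Differentiable ℝ (deriv ψ) := hd2.1
  have hψ''c : Continuous (deriv (deriv ψ)) := hd2.2
  have hψ'c : Continuous (deriv ψ) := hψ'diff.continuous
  have hψ's : HasCompactSupport (deriv ψ) := hψs.deriv
  have hψ''s : HasCompactSupport (deriv (deriv ψ)) := hψ's.deriv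
  have hψ'i : Integrable (deriv ψ) := hψ'c.integrable_of_hasCompactSupport hψ's
  have hψ''i : Integrable (deriv (deriv ψ)) := hψ''c.integrable_of_hasCompactSupport hψ''s
  -- Fourier decay
  set B : ℝ := (∫ v : ℝ, ‖ψ v‖) + (∫ v : ℝ, ‖deriv (deriv ψ) v‖) / (4 * π ^ 2) with hB
  have hB0 : 0 ≤ B := by
    apply add_nonneg (integral_nonneg fun v => norm_nonneg _)
    apply div_nonneg (integral_nonneg fun v => norm_nonneg _)
    positivity
  have hnormF : ∀ (u : ℝ → ℂ), ∀ w : ℝ, ‖𝓕 u w‖ ≤ ∫ v : ℝ, ‖u v‖ := by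
    intro u w
    rw [Real.fourier_real_eq]
    refine (norm_integral_le_integral_norm _).trans (le_of_eq ?_)
    congr 1 with v
    rw [Circle.norm_smul]
  have hf1 := Real.fourier_deriv hψi hψdiff hψ'i
  have hf2 := Real.fourier_deriv hψ'i hψ'diff hψ''i
  have hFourier : ∀ w : ℝ, ‖𝓕 ψ w‖ ≤ B / (1 + w ^ 2) := by
    intro w
    have h0 : ‖𝓕 ψ w‖ ≤ ∫ v : ℝ, ‖ψ v‖ := hnormF ψ w
    have h2 : ‖𝓕 (deriv (deriv ψ)) w‖ ≤ ∫ v : ℝ, ‖deriv (deriv ψ) v‖ := hnormF _ w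
    have hnc : ‖(2 * (π:ℂ) * Complex.I * (w:ℂ))‖ = 2 * π * |w| := by
      simp only [norm_mul, Complex.norm_I, Complex.norm_real, Real.norm_eq_abs, mul_one]
      rw [abs_of_pos hπ]
      norm_num
    have e1 : 𝓕 (deriv (deriv ψ)) w = (2 * (π:ℂ) * Complex.I * (w:ℂ)) •
        ((2 * (π:ℂ) * Complex.I * (w:ℂ)) • 𝓕 ψ w) := by
      rw [congrFun hf2 w, congrFun hf1 w]
    have hkey : 4 * π ^ 2 * w ^ 2 * ‖𝓕 ψ w‖ ≤ ∫ v : ℝ, ‖deriv (deriv ψ) v‖ := by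
      have e2 : ‖𝓕 (deriv (deriv ψ)) w‖ = 4 * π ^ 2 * w ^ 2 * ‖𝓕 ψ w‖ := by
        rw [e1, norm_smul, norm_smul, hnc]
        rw [show 2 * π * |w| * (2 * π * |w| * ‖𝓕 ψ w‖)
            = 4 * π ^ 2 * |w| ^ 2 * ‖𝓕 ψ w‖ from by ring, sq_abs]
      linarith [h2, e2.symm.le]
    have hπ2 : (0:ℝ) < 4 * π ^ 2 := by positivity
    have hw2 : w ^ 2 * ‖𝓕 ψ w‖ ≤ (∫ v : ℝ, ‖deriv (deriv ψ) v‖) / (4 * π ^ 2) := by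
      rw [le_div_iff₀ hπ2]
      calc w ^ 2 * ‖𝓕 ψ w‖ * (4 * π ^ 2) = 4 * π ^ 2 * w ^ 2 * ‖𝓕 ψ w‖ := by ring
        _ ≤ _ := hkey
    rw [le_div_iff₀ (by positivity : (0:ℝ) < 1 + w ^ 2)]
    have e3 : ‖𝓕 ψ w‖ * (1 + w ^ 2) = ‖𝓕 ψ w‖ + w ^ 2 * ‖𝓕 ψ w‖ := by ring
    rw [e3, hB]
    exact add_le_add h0 hw2
  -- the function g
  set g : ℝ → ℂ := mellinRep c ψ with hg
  have hcpow : ∀ x : ℝ, 0 < x → ∀ v : ℝ, (x:ℂ) ^ (-(c:ℂ) - (v:ℂ) * Complex.I)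
      = ((x ^ (-c) : ℝ) : ℂ) *
        Complex.exp ((↑(-2 * π * v * (Real.log x / (2 * π))) * Complex.I)) := by
    intro x hx v
    have hx0 : (x:ℂ) ≠ 0 := by
      simp only [ne_eq, Complex.ofReal_eq_zero]
      exact hx.ne'
    rw [Complex.cpow_def_of_ne_zero hx0, ← Complex.ofReal_log hx.le]
    have harg : -2 * π * v * (Real.log x / (2 * π)) = -(v * Real.log x) := by
      field_simp
    rw [harg]
    rw [show ((Real.log x : ℂ)) * (-(c:ℂ) - (v:ℂ) * Complex.I)
        = ((-c * Real.log x : ℝ) : ℂ) + (↑(-(v * Real.log x)) * Complex.I) by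
      push_cast; ring]
    rw [Complex.exp_add]
    congr 1
    rw [Real.rpow_def_of_pos hx, ← Complex.ofReal_exp]
    norm_num [mul_comm]
  have hgx : ∀ x : ℝ, 0 < x →
      ‖g x‖ = (1 / (2 * π)) * (x ^ (-c) * ‖𝓕 ψ (Real.log x / (2 * π))‖) := by
    intro x hx
    have hint : (∫ v : ℝ, ψ v * (x:ℂ) ^ (-(c:ℂ) - (v:ℂ) * Complex.I))
        = ((x ^ (-c) : ℝ) : ℂ) * ∫ v : ℝ,
            Complex.exp ((↑(-2 * π * v * (Real.log x / (2 * π))) * Complex.I)) • ψ v := by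
      rw [← integral_const_mul]
      congr 1 with v
      rw [hcpow x hx v, smul_eq_mul]
      ring
    show ‖mellinRep c ψ x‖ = _
    rw [mellinRep, hint, ← Real.fourier_real_eq_integral_exp_smul]
    rw [norm_mul, norm_mul, Complex.norm_real, Complex.norm_real, Real.norm_eq_abs,
      Real.norm_eq_abs, abs_of_pos (by positivity : (0:ℝ) < 1 / (2*π)),
      abs_of_pos (Real.rpow_pos_of_pos hx _)]
  have hgb : ∀ x : ℝ, 0 < x →
      ‖g x‖ ≤ (B / (2 * π)) * (x ^ (-c) * (1 + (Real.log x / (2 * π)) ^ 2)⁻¹) := by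
    intro x hx
    rw [hgx x hx]
    have h1 := hFourier (Real.log x / (2 * π))
    have hxc : (0:ℝ) < x ^ (-c) := Real.rpow_pos_of_pos hx _
    have h2 : (0:ℝ) < 1 + (Real.log x / (2 * π)) ^ 2 := by positivity
    calc (1 / (2 * π)) * (x ^ (-c) * ‖𝓕 ψ (Real.log x / (2 * π))‖)
        ≤ (1 / (2 * π)) * (x ^ (-c) * (B / (1 + (Real.log x / (2 * π)) ^ 2))) := by
          apply mul_le_mul_of_nonneg_left _ (by positivity)
          exact mul_le_mul_of_nonneg_left h1 hxc.le
      _ = (B / (2 * π)) * (x ^ (-c) * (1 + (Real.log x / (2 * π)) ^ 2)⁻¹) := by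
          field_simp
  -- continuity of g on Ioi 0
  have hgcont : ContinuousOn g (Set.Ioi 0) := by
    intro x hx
    have hx0 : (0:ℝ) < x := hx
    apply ContinuousAt.continuousWithinAt
    show ContinuousAt (mellinRep c ψ) x
    have hmain : ContinuousAt (fun y : ℝ =>
        ∫ v : ℝ, ψ v * (y:ℂ) ^ (-(c:ℂ) - (v:ℂ) * Complex.I)) x := by
      have hnb : Set.Ioo (x/2) (2*x) ∈ 𝓝 x :=
        Ioo_mem_nhds (by linarith) (by linarith)
      set Mb : ℝ := max ((x/2) ^ (-c)) ((2*x) ^ (-c)) with hMb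
      have hbase : ∀ y : ℝ, y ∈ Set.Ioo (x/2) (2*x) → y ^ (-c) ≤ Mb := by
        intro y hy
        have hy0 : (0:ℝ) < y := lt_trans (by linarith) hy.1
        rcases le_total 0 (-c) with hc0 | hc0
        · exact le_max_of_le_right (Real.rpow_le_rpow hy0.le hy.2.le hc0)
        · apply le_max_of_le_left
          have hxy : (0:ℝ) < x/2 := by linarith
          rw [show (-c) = -(- -c) by ring, Real.rpow_neg hy0.le, Real.rpow_neg hxy.le]
          apply inv_anti₀ (Real.rpow_pos_of_pos hxy _)
          exact Real.rpow_le_rpow hxy.le hy.1.le (by linarith)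
      have hre : ∀ v : ℝ, (-(c:ℂ) - (v:ℂ) * Complex.I).re = -c := by
        intro v
        simp [Complex.sub_re, Complex.neg_re, Complex.ofReal_re, Complex.mul_re,
          Complex.I_re, Complex.I_im, Complex.ofReal_im]
      apply continuousAt_of_dominated (bound := fun v => ‖ψ v‖ * Mb)
      · filter_upwards [hnb] with y hy
        have hy0 : (0:ℝ) < y := lt_trans (by linarith) hy.1
        apply Continuous.aestronglyMeasurable
        apply hψc.mul
        apply continuous_const.cpow
          (continuous_const.sub (Complex.continuous_ofReal.mul continuous_const))
        intro v
        exact Complex.ofReal_mem_slitPlane.mpr hy0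
      · filter_upwards [hnb] with y hy
        apply ae_of_all
        intro v
        have hy0 : (0:ℝ) < y := lt_trans (by linarith) hy.1
        rw [norm_mul]
        have hnorm : ‖(y:ℂ) ^ (-(c:ℂ) - (v:ℂ) * Complex.I)‖ = y ^ (-c) := by
          rw [Complex.norm_cpow_eq_rpow_re_of_pos hy0, hre v]
        rw [hnorm]
        exact mul_le_mul_of_nonneg_left (hbase y hy) (norm_nonneg _)
      · exact hψi.norm.mul_const Mb
      · apply ae_of_all
        intro v
        apply ContinuousAt.mul continuousAt_const
        exact (Complex.continuous_ofReal.continuousAt).cpow continuousAt_const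
          (Complex.ofReal_mem_slitPlane.mpr hx0)
    exact ContinuousAt.mul continuousAt_const hmain
  -- integrability of the X^p integrand
  have hgXp : IntegrableOn (fun u : ℝ => ‖g u‖ ^ p * u ^ (c * p - 1)) (Set.Ioi 0) := by
    set β : ℝ := B / (2 * π) with hβ
    have hβ0 : 0 ≤ β := by positivity
    set K : ℝ := max 1 (β ^ (2:ℕ)) with hK
    have hβp : β ^ p ≤ K := by
      rcases le_total β 1 with h | h
      · exact le_max_of_le_left (Real.rpow_le_one hβ0 h (by linarith : (0:ℝ) ≤ p))
      · apply le_max_of_le_right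
        calc β ^ p ≤ β ^ (2:ℝ) := Real.rpow_le_rpow_of_exponent_le h hp2
          _ = β ^ (2:ℕ) := by rw [← Real.rpow_natCast β 2]; norm_num
    have hcore := (integrableOn_core (2*π) (by positivity)).const_mul K
    apply Integrable.mono hcore
    · apply ContinuousOn.aestronglyMeasurable _ measurableSet_Ioi
      apply ContinuousOn.mul
      · exact hgcont.norm.rpow_const (fun u hu => Or.inr (by linarith))
      · exact (continuousOn_id.rpow_const (fun u hu => Or.inl (ne_of_gt hu)))
    · rw [ae_restrict_iff' measurableSet_Ioi]
      apply ae_of_all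
      intro u hu
      have hu0 : (0:ℝ) < u := hu
      set h : ℝ := (1 + (Real.log u / (2 * π)) ^ 2)⁻¹ with hh
      have hh0 : 0 < h := by positivity
      have hh1 : h ≤ 1 := by
        rw [hh]
        apply inv_le_one_of_one_le₀
        nlinarith [sq_nonneg (Real.log u / (2*π))]
      have step1 : ‖g u‖ ^ p ≤ K * (u ^ (-(c*p)) * h) := by
        calc ‖g u‖ ^ p ≤ (β * (u ^ (-c) * h)) ^ p := by
              apply Real.rpow_le_rpow (norm_nonneg _) (hgb u hu0) (by linarith)
          _ = β ^ p * ((u ^ (-c)) ^ p * h ^ p) := by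
              rw [Real.mul_rpow hβ0 (by positivity), Real.mul_rpow (by positivity) hh0.le]
          _ ≤ K * ((u ^ (-c)) ^ p * h) := by
              have h1 : h ^ p ≤ h := by
                calc h ^ p ≤ h ^ (1:ℝ) :=
                      Real.rpow_le_rpow_of_exponent_ge hh0 hh1 hp1
                  _ = h := Real.rpow_one h
              have h2 : (u ^ (-c)) ^ p * h ^ p ≤ (u ^ (-c)) ^ p * h :=
                mul_le_mul_of_nonneg_left h1 (by positivity)
              have h3 : (0:ℝ) ≤ (u ^ (-c)) ^ p * h ^ p := by positivity
              exact mul_le_mul hβp h2 h3 (le_trans zero_le_one (le_max_left _ _))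
          _ = K * (u ^ (-(c*p)) * h) := by
              have e4 : ((u:ℝ) ^ (-c)) ^ p = u ^ (-(c*p)) := by
                rw [← Real.rpow_mul hu0.le, show (-c)*p = -(c*p) by ring]
              rw [e4]
      have hnn : (0:ℝ) ≤ ‖g u‖ ^ p * u ^ (c * p - 1) := by positivity
      rw [Real.norm_of_nonneg hnn]
      have hKnn : (0:ℝ) ≤ K := le_trans zero_le_one (le_max_left _ _)
      have step2 : ‖g u‖ ^ p * u ^ (c * p - 1) ≤ K * (u ^ (-(c*p)) * h) * u ^ (c*p-1) :=
        mul_le_mul_of_nonneg_right step1 (Real.rpow_nonneg hu0.le _)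
      have step3 : K * (u ^ (-(c*p)) * h) * u ^ (c*p-1) = K * (u⁻¹ * h) := by
        rw [mul_assoc, mul_comm (u ^ (-(c*p))) h, mul_assoc, ← Real.rpow_add hu0]
        rw [show -(c*p) + (c*p-1) = -1 by ring, Real.rpow_neg_one]
        ring
      rw [step3] at step2
      refine step2.trans (le_abs_self _)
  -- final estimate
  refine ⟨g, ψ, ⟨⟨hgcont.aestronglyMeasurable measurableSet_Ioi, hgXp⟩,
    hgcont, hψi, hψ0, fun x _ => rfl⟩, ?_⟩
  intro v
  rcases lt_or_ge σ |v| with hvσ | hvσ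
  · rw [hψ0 v hvσ, sub_zero]
    exact (hS v hvσ.le).trans (by linarith)
  · -- |v| ≤ σ
    have hψv : ψ v = ∫ s : ℝ, η (v - s) * Fc s := by
      have h := MeasureTheory.integral_sub_left_eq_self
        (fun t => η t * Fc (v - t)) volume v
      simp only [sub_sub_cancel] at h
      rw [hψdef v, ← h]
    have hFi : Integrable Fc := hFcc.integrable_of_hasCompactSupport hFcs
    obtain ⟨Cθ, hCθ⟩ := (isCompact_Icc (a := -a) (b := a)).exists_bound_of_continuousOn
      hθc.continuousOn
    have hηb : ∀ u : ℝ, ‖η u‖ ≤ max Cθ 0 := by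
      intro u
      rw [hη]
      by_cases hu : u ∈ Set.Icc (-a) a
      · rw [Set.indicator_of_mem hu]
        exact le_max_of_le_left (hCθ u hu)
      · rw [Set.indicator_of_notMem hu]
        simp
    have hηm : AEStronglyMeasurable (fun s : ℝ => η (v - s)) volume := by
      apply Measurable.aestronglyMeasurable
      exact ((hθc.measurable.indicator measurableSet_Icc).comp
        (measurable_const.sub measurable_id))
    have h1i : Integrable (fun s : ℝ => η (v - s) * Fc s) :=
      hFi.bdd_mul (c := max Cθ 0) hηm (ae_of_all _ fun s => hηb _)
    have h2i : Integrable (fun s : ℝ => θ v * Fc s) := hFi.const_mul _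
    have h3i : Integrable (fun s : ℝ => (θ v - η (v - s)) * Fc s) := by
      have := h2i.sub h1i
      refine this.congr (ae_of_all _ fun s => ?_)
      simp only [Pi.sub_apply]
      ring
    have hμF : (∫ s : ℝ, Fc s) = 1 := by
      have he : (∫ s : ℝ, Fc s) = ((∫ s : ℝ, Fn s : ℝ) : ℂ) := by
        simp only [hFc]
        exact integral_ofReal
      rw [he, hFn, F.integral_normed, Complex.ofReal_one]
    have hsubeq : θ v - ψ v = ∫ s : ℝ, (θ v - η (v - s)) * Fc s := by
      rw [hψv]
      have heq2 : (∫ s : ℝ, (θ v - η (v - s)) * Fc s)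
          = (∫ s : ℝ, θ v * Fc s) - ∫ s : ℝ, η (v - s) * Fc s := by
        rw [← integral_sub h2i h1i]
        congr 1 with s
        ring
      rw [heq2, integral_const_mul, hμF, mul_one]
    have hkey : ∀ s : ℝ, ‖(θ v - η (v - s)) * Fc s‖ ≤ (S + ε) * Fn s := by
      intro s
      rw [norm_mul]
      have hFcn : ‖Fc s‖ = Fn s := by
        rw [hFc, Complex.norm_real, Real.norm_eq_abs, abs_of_nonneg (F.nonneg_normed s)]
      rw [hFcn]
      by_cases hs0 : Fn s = 0
      · rw [hs0, mul_zero, mul_zero]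
      · have hsδ : |s| < δ := by
          by_contra hc
          push_neg at hc
          exact hs0 (hFnz s hc)
        apply mul_le_mul_of_nonneg_right _ (F.nonneg_normed s)
        by_cases hmem : v - s ∈ Set.Icc (-a) a
        · rw [hη, Set.indicator_of_mem hmem]
          have hvK : v ∈ Set.Icc (-(σ+1)) (σ+1) := by
            rw [Set.mem_Icc]
            have := abs_le.mp hvσ
            constructor <;> linarith [this.1, this.2]
          have hvsK : v - s ∈ Set.Icc (-(σ+1)) (σ+1) := by
            rw [Set.mem_Icc]
            have h1 : |v - s| ≤ |v| + |s| := abs_sub v s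
            have := abs_le.mp (show |v - s| ≤ σ + 1 by
              calc |v - s| ≤ |v| + |s| := abs_sub v s
                _ ≤ σ + δ := by linarith
                _ ≤ σ + 1 := by linarith)
            exact this
          have hd := hδ₁ v hvK (v - s) hvsK (by
            rw [Real.dist_eq, show v - (v - s) = s by ring]
            linarith)
          rw [Complex.dist_eq] at hd
          linarith
        · rw [hη, Set.indicator_of_notMem hmem, sub_zero]
          have hvs : a < |v - s| := by
            by_contra hc
            push_neg at hc
            exact hmem (abs_le.mp hc)
          have habs : |v - s| ≤ |v| + |s| := abs_sub v s
          have hvlow : σ - 2*δ < |v| := by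
            simp only [ha_def] at hvs
            linarith
          have hv0 : v ≠ 0 := by
            intro h0
            rw [h0, abs_zero] at hvlow
            linarith
          have hvabs : 0 < |v| := abs_pos.mpr hv0
          set v' : ℝ := (σ / |v|) * v with hv'
          have hv'abs : |v'| = σ := by
            rw [hv', abs_mul, abs_of_pos (div_pos hσ hvabs), div_mul_cancel₀ _ hvabs.ne']
          have hθv' : ‖θ v'‖ ≤ S := hS v' hv'abs.ge
          have hdiffvv' : v - v' = v * ((|v| - σ) / |v|) := by
            rw [hv']
            field_simp
          have hdist : |v - v'| ≤ δ₁ := by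
            rw [hdiffvv', abs_mul, abs_div, abs_abs]
            rw [div_eq_mul_inv, ← mul_assoc, mul_comm |v|, mul_assoc,
              mul_inv_cancel₀ hvabs.ne', mul_one]
            rw [abs_of_nonpos (by linarith : |v| - σ ≤ 0)]
            linarith
          have hvK : v ∈ Set.Icc (-(σ+1)) (σ+1) := by
            rw [Set.mem_Icc]
            have := abs_le.mp hvσ
            constructor <;> linarith [this.1, this.2]
          have hv'K : v' ∈ Set.Icc (-(σ+1)) (σ+1) := by
            rw [Set.mem_Icc]
            have := abs_le.mp hv'abs.le
            constructor <;> linarith [this.1, this.2]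
          have hd := hδ₁ v hvK v' hv'K (by rw [Real.dist_eq]; exact hdist)
          rw [Complex.dist_eq] at hd
          have htri : ‖θ v‖ - ‖θ v'‖ ≤ ‖θ v - θ v'‖ := norm_sub_norm_le _ _
          linarith
    rw [hsubeq]
    calc ‖∫ s : ℝ, (θ v - η (v - s)) * Fc s‖
        ≤ ∫ s : ℝ, ‖(θ v - η (v - s)) * Fc s‖ := norm_integral_le_integral_norm _
      _ ≤ ∫ s : ℝ, (S + ε) * Fn s := by
          apply integral_mono h3i.norm (F.integrable_normed.const_mul _) hkey
      _ = (S + ε) * ∫ s : ℝ, Fn s := by rw [integral_const_mul]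
      _ = S + ε := by rw [hFn, F.integral_normed, mul_one]

/-- Corollary 1, q = ∞: distance of Mellin derivatives from the
Bernstein space. `Θ^k_c f` has representing function `v ↦ (-iv)^k φ(v)`. -/
theorem mellin_distance_deriv_inf
    (c σ p : ℝ) (hσ : 0 < σ) (hp : p ∈ Set.Icc (1:ℝ) 2) (k : ℕ)
    (f φ : ℝ → ℂ) (hφ1 : Integrable φ) (hphi_inf : MemLp φ ⊤) (hφc : Continuous φ)
    (hf : ∀ x ∈ Set.Ioi (0:ℝ), f x = mellinRep c φ x)
    (hk1 : Integrable fun v : ℝ => (v:ℂ) ^ k * φ v)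
    (hk_inf : MemLp (fun v : ℝ => (v:ℂ) ^ k * φ v) ⊤) :
    mellinDist c σ p ⊤ (fun v : ℝ => (-Complex.I * (v:ℂ)) ^ k * φ v)
      = ENNReal.ofReal (⨆ v : {v : ℝ // σ ≤ |v|}, ‖((v:ℝ):ℂ) ^ k * φ (v:ℝ)‖) := by

  obtain ⟨hp1, hp2⟩ := hp
  set Φ : ℝ → ℂ := fun v => (v:ℂ) ^ k * φ v with hΦ
  set θ : ℝ → ℂ := fun v : ℝ => (-Complex.I * (v:ℂ)) ^ k * φ v with hθdef
  have hθΦ : ∀ v : ℝ, θ v = (-Complex.I) ^ k * Φ v := by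
    intro v
    simp only [hθdef, hΦ, mul_pow]
    ring
  have hnormI : ‖(-Complex.I) ^ k‖ = 1 := by
    rw [norm_pow, norm_neg, Complex.norm_I, one_pow]
  have hnorm : ∀ v : ℝ, ‖θ v‖ = ‖Φ v‖ := by
    intro v
    rw [hθΦ v, norm_mul, hnormI, one_mul]
  have hΦc : Continuous Φ := (Complex.continuous_ofReal.pow k).mul hφc
  have hθc : Continuous θ := ((continuous_const.mul Complex.continuous_ofReal).pow k).mul hφc
  have hθ1 : Integrable θ := by
    have : θ = fun v => (-Complex.I) ^ k * Φ v := funext hθΦ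
    rw [this]
    exact hk1.const_mul _
  -- pointwise bound from L∞
  have hM : ∀ v : ℝ, ‖Φ v‖ ≤ (eLpNorm Φ ⊤ volume).toReal := by
    intro v
    have h1 := ofReal_norm_le_eLpNormTop Φ Φ v hΦc.continuousAt
      (Filter.Eventually.of_forall fun _ => rfl)
    exact (ENNReal.ofReal_le_iff_le_toReal hk_inf.2.ne).mp h1
  have hne : Nonempty {v : ℝ // σ ≤ |v|} := ⟨⟨σ, by rw [abs_of_pos hσ]⟩⟩
  have hbdd : BddAbove (Set.range fun v : {v : ℝ // σ ≤ |v|} => ‖Φ (v:ℝ)‖) := by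
    refine ⟨(eLpNorm Φ ⊤ volume).toReal, ?_⟩
    rintro x ⟨v, rfl⟩
    exact hM v
  set S : ℝ := ⨆ v : {v : ℝ // σ ≤ |v|}, ‖Φ (v:ℝ)‖ with hSdef
  have hS0 : 0 ≤ S := le_trans (norm_nonneg _)
    (le_ciSup hbdd (⟨σ, by rw [abs_of_pos hσ]⟩ : {v : ℝ // σ ≤ |v|}))
  have hSb : ∀ v : ℝ, σ ≤ |v| → ‖θ v‖ ≤ S := by
    intro v hv
    rw [hnorm v]
    exact le_ciSup hbdd (⟨v, hv⟩ : {v : ℝ // σ ≤ |v|})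
  have hgoal : mellinDist c σ p ⊤ θ = ENNReal.ofReal S := by
    apply le_antisymm
    · -- upper bound
      apply ENNReal.le_of_forall_pos_le_add
      intro ε hε _
      have hεr : (0:ℝ) < (ε : ℝ) := hε
      obtain ⟨g, ψ, hpair, hbound⟩ :=
        exists_pair c σ p hσ hp1 hp2 θ hθc hθ1 S (ε:ℝ) hεr hS0 hSb
      have hmem : eLpNorm (fun v => θ v - ψ v) ⊤ volume ∈
          {d : ℝ≥0∞ | ∃ g ψ : ℝ → ℂ, IsBernsteinPair c σ p g ψ ∧
            d = eLpNorm (fun v => θ v - ψ v) ⊤ volume} := by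
        exact ⟨g, ψ, ⟨hpair.1, hpair.2.1, hpair.2.2.1, hpair.2.2.2.1, hpair.2.2.2.2⟩, rfl⟩
      refine (sInf_le hmem).trans ?_
      have hb := eLpNormEssSup_le_of_ae_bound (C := S + (ε:ℝ)) (μ := volume)
        (f := fun v => θ v - ψ v) (Filter.Eventually.of_forall hbound)
      rw [MeasureTheory.eLpNorm_exponent_top]
      refine hb.trans ?_
      rw [ENNReal.ofReal_add hS0 hεr.le, ENNReal.ofReal_coe_nnreal]
    · -- lower bound
      apply le_sInf
      rintro d ⟨g, ψ, ⟨_, _, _, hψ0, _⟩, rfl⟩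
      set E := eLpNorm (fun v => θ v - ψ v) ⊤ volume with hE
      rcases eq_or_ne E ⊤ with htop | htop
      · rw [htop]; exact le_top
      · apply ENNReal.ofReal_le_of_le_toReal
        apply ciSup_le
        rintro ⟨v, hv⟩
        have hseq : ∀ n : ℕ, ‖Φ (v * (1 + 1/((n:ℝ)+1)))‖ ≤ E.toReal := by
          intro n
          set u : ℝ := v * (1 + 1/((n:ℝ)+1)) with hu
          have hn1 : (0:ℝ) < 1/((n:ℝ)+1) := by positivity
          have hvu : σ < |u| := by
            rw [hu, abs_mul, abs_of_pos (by linarith : (0:ℝ) < 1 + 1/((n:ℝ)+1))]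
            nlinarith [abs_nonneg v]
          have hopen : {w : ℝ | σ < |w|} ∈ 𝓝 u := by
            have : IsOpen {w : ℝ | σ < |w|} :=
              isOpen_lt continuous_const continuous_abs
            exact this.mem_nhds hvu
          have heveq : ∀ᶠ w in 𝓝 u, θ w - ψ w = θ w := by
            filter_upwards [hopen] with w hw
            rw [hψ0 w hw, sub_zero]
          have h1 := ofReal_norm_le_eLpNormTop (fun w => θ w - ψ w) θ u
            hθc.continuousAt heveq
          rw [hnorm u] at h1
          exact (ENNReal.ofReal_le_iff_le_toReal htop).mp h1
        have hlim : Tendsto (fun n : ℕ => ‖Φ (v * (1 + 1/((n:ℝ)+1)))‖) atTop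
            (𝓝 ‖Φ v‖) := by
          have h1 : Tendsto (fun n : ℕ => v * (1 + 1/((n:ℝ)+1))) atTop (𝓝 v) := by
            have h2 : Tendsto (fun n : ℕ => 1 / ((n:ℝ) + 1)) atTop (𝓝 0) := tendsto_one_div_add_atTop_nhds_zero_nat
            have h3 : Tendsto (fun n : ℕ => 1 + 1/((n:ℝ)+1)) atTop (𝓝 1) := by
              have := (tendsto_const_nhds (x := (1:ℝ)) (f := atTop (α := ℕ))).add h2
              simpa using this
            have h4 := (tendsto_const_nhds (x := v) (f := atTop (α := ℕ))).mul h3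
            simpa using h4
          exact ((hΦc.continuousAt (x := v)).tendsto.comp h1).norm
        exact le_of_tendsto' hlim hseq
  exact hgoal
end
end
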